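/- Let D be a dyadic lattice in ℝ^d and let w be a weight such that w(H) = +∞ for every quadrant H of D. Let 1 ≤ p ≤ q ≤ ∞ and α ∈ [0, d] satisfy 1/q + α/d = 1/p. Then ‖M^D_{α,w} f‖_{L^{q,∞}(ℝ^d, w dx)} ≤ ‖f‖_{L^p(ℝ^d, w dx)} for all f ∈ L^p(ℝ^d, w dx). -/

import Mathlib

open MeasureTheory ENNReal NNReal Set

noncomputable section

/-- A half-open axis-parallel cube in `ℝ^d`, given by its corner and (positive) sidelength. -/
structure Cube (d : ℕ) where
  corner : Fin d → ℝ
  side : ℝ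
  side_pos : 0 < side

namespace Cube

variable {d : ℕ}

/-- The set of points of the cube: `[x_1, x_1+l) × ⋯ × [x_d, x_d+l)`. -/
def toSet (Q : Cube d) : Set (Fin d → ℝ) :=
  {y | ∀ i, Q.corner i ≤ y i ∧ y i < Q.corner i + Q.side}

/-- The translate `Q + l(Q) m` of a cube. -/
def translate (Q : Cube d) (m : Fin d → ℤ) : Cube d :=
  ⟨fun i => Q.corner i + Q.side * (m i : ℝ), Q.side, Q.side_pos⟩

/-- The corner child `x(Q) + (1/2)(Q - x(Q))` of a cube. -/
def cornerChild (Q : Cube d) : Cube d :=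
  ⟨Q.corner, Q.side / 2, by have := Q.side_pos; linarith⟩

/-- The threefold expansion `x(Q) + 3(Q - x(Q))` of a cube from its corner. -/
def expand3 (Q : Cube d) : Cube d :=
  ⟨Q.corner, 3 * Q.side, by have := Q.side_pos; linarith⟩

/-- The dilate `D_c Q`: cube with the same center as `Q` and sidelength `c·l(Q)`. -/
def dilate (Q : Cube d) (c : ℝ) (hc : 0 < c) : Cube d :=
  ⟨fun i => Q.corner i + Q.side / 2 - c * Q.side / 2, c * Q.side, by
    have := Q.side_pos; positivity⟩

end Cube

/-- A dyadic lattice in `ℝ^d`: a family of generations of cubes, each generation formed by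
all translates of one of its cubes, and each generation containing a cube whose corner child
belongs to the next generation. -/
structure DyadicLattice (d : ℕ) where
  gen : ℤ → Set (Cube d)
  gen_translates : ∀ k, ∃ Q ∈ gen k, gen k = {R | ∃ m : Fin d → ℤ, R = Q.translate m}
  cornerChild_mem : ∀ k, ∃ Q ∈ gen k, Q.cornerChild ∈ gen (k + 1)

/-- The collection of all cubes of a dyadic lattice. -/
def DyadicLattice.cubes {d : ℕ} (D : DyadicLattice d) : Set (Cube d) := ⋃ k, D.gen k

/-- The quadrant of a dyadic lattice containing `x`: the union of all cubes of the lattice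
containing `x`. -/
def DyadicLattice.quadrant {d : ℕ} (D : DyadicLattice d) (x : Fin d → ℝ) :
    Set (Fin d → ℝ) :=
  ⋃ Q ∈ {Q : Cube d | Q ∈ D.cubes ∧ x ∈ Q.toSet}, Q.toSet

/-- A weight: a locally integrable, a.e. positive (and finite) function. -/
def IsWeight {d : ℕ} (w : (Fin d → ℝ) → ℝ) : Prop :=
  LocallyIntegrable w volume ∧ ∀ᵐ x ∂(volume : Measure (Fin d → ℝ)), 0 < w x

/-- The measure `w dx` associated to a weight. -/
def wMeasure {d : ℕ} (w : (Fin d → ℝ) → ℝ) : Measure (Fin d → ℝ) :=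
  volume.withDensity fun x => ENNReal.ofReal (w x)

/-- `w(E) = ∫_E w dx`. -/
def wInt {d : ℕ} (w : (Fin d → ℝ) → ℝ) (E : Set (Fin d → ℝ)) : ℝ≥0∞ :=
  ∫⁻ x in E, ENNReal.ofReal (w x)

/-- The `L^q` norm (with `q = ∞` allowed) of an `ℝ≥0∞`-valued function. -/
def eLpNormENN {X : Type*} [MeasurableSpace X] (g : X → ℝ≥0∞) (q : ℝ≥0∞)
    (μ : Measure X) : ℝ≥0∞ :=
  if q = ∞ then essSup g μ
  else (∫⁻ x, g x ^ q.toReal ∂μ) ^ (1 / q.toReal)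

/-- The weak `L^q` quasinorm (with `q = ∞` allowed, interpreted as the `L^∞` norm) of an
`ℝ≥0∞`-valued function: `sup_{t>0} t · μ{g > t}^{1/q}`. -/
def wnormENN {X : Type*} [MeasurableSpace X] (g : X → ℝ≥0∞) (q : ℝ≥0∞)
    (μ : Measure X) : ℝ≥0∞ :=
  if q = ∞ then essSup g μ
  else ⨆ t : ℝ≥0, (t : ℝ≥0∞) * μ {x | (t : ℝ≥0∞) < g x} ^ (1 / q.toReal)

/-- The weighted dyadic fractional maximal operator
`M^D_{α,w} f(x) = sup_{Q ∈ D, x ∈ Q} w(Q)^{α/d-1} ∫_Q |f| w`. -/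
def MwDyadic {d : ℕ} (D : DyadicLattice d) (α : ℝ) (w f : (Fin d → ℝ) → ℝ)
    (x : Fin d → ℝ) : ℝ≥0∞ :=
  ⨆ (Q : Cube d) (_ : Q ∈ D.cubes) (_ : x ∈ Q.toSet),
    wInt w Q.toSet ^ (α / (d : ℝ) - 1) *
      ∫⁻ y in Q.toSet, (‖f y‖₊ : ℝ≥0∞) * ENNReal.ofReal (w y)

/-- The dyadic fractional maximal operator `M^D_α f(x) = sup_{Q ∈ D, x ∈ Q} |Q|^{α/d} ⨍_Q |f|`. -/
def MfracDyadic {d : ℕ} (D : DyadicLattice d) (α : ℝ) (f : (Fin d → ℝ) → ℝ)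
    (x : Fin d → ℝ) : ℝ≥0∞ :=
  ⨆ (Q : Cube d) (_ : Q ∈ D.cubes) (_ : x ∈ Q.toSet),
    volume Q.toSet ^ (α / (d : ℝ) - 1) * ∫⁻ y in Q.toSet, (‖f y‖₊ : ℝ≥0∞)

/-- The fractional maximal operator `M_α f(x) = sup_{Q ∋ x} |Q|^{α/d} ⨍_Q |f|`,
supremum over all cubes containing `x`. -/
def Mfrac {d : ℕ} (α : ℝ) (f : (Fin d → ℝ) → ℝ) (x : Fin d → ℝ) : ℝ≥0∞ :=
  ⨆ (Q : Cube d) (_ : x ∈ Q.toSet),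
    volume Q.toSet ^ (α / (d : ℝ) - 1) * ∫⁻ y in Q.toSet, (‖f y‖₊ : ℝ≥0∞)

/-- The weighted fractional maximal operator
`M_{α,w} f(x) = sup_{Q ∋ x} w(Q)^{α/d-1} ∫_Q |f| w`, supremum over all cubes containing `x`. -/
def Mwfrac {d : ℕ} (α : ℝ) (w f : (Fin d → ℝ) → ℝ) (x : Fin d → ℝ) : ℝ≥0∞ :=
  ⨆ (Q : Cube d) (_ : x ∈ Q.toSet),
    wInt w Q.toSet ^ (α / (d : ℝ) - 1) *
      ∫⁻ y in Q.toSet, (‖f y‖₊ : ℝ≥0∞) * ENNReal.ofReal (w y)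

/-- An `η`-sparse collection of cubes: each cube `Q` has a measurable subset `G(Q)` with
`|G(Q)| ≥ η|Q|`, the sets `G(Q)` being pairwise disjoint. -/
def IsSparseCubes {d : ℕ} (η : ℝ) (S : Set (Cube d)) : Prop :=
  ∃ G : Cube d → Set (Fin d → ℝ),
    (∀ Q ∈ S, G Q ⊆ Q.toSet ∧ MeasurableSet (G Q) ∧
      ENNReal.ofReal η * volume Q.toSet ≤ volume (G Q)) ∧
    S.PairwiseDisjoint G

/-- The sparse operator `A_S^α f(x) = Σ_{Q ∈ S} χ_Q(x) |Q|^{α/d} ⨍_Q |f|`. -/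
def sparseOp {d : ℕ} (α : ℝ) (S : Set (Cube d)) (f : (Fin d → ℝ) → ℝ)
    (x : Fin d → ℝ) : ℝ≥0∞ :=
  ∑' Q : S, (Q : Cube d).toSet.indicator
    (fun _ => volume (Q : Cube d).toSet ^ (α / (d : ℝ) - 1) *
      ∫⁻ y in (Q : Cube d).toSet, (‖f y‖₊ : ℝ≥0∞)) x

/-- The `A_{p,q}^α` constant of a pair of weights:
`[v,w] = sup_Q |Q|^{α/d-1} (∫_Q v^{-p'/p})^{1/p'} (∫_Q w)^{1/q}` where `p' = p/(p-1)`. -/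
def apqConst {d : ℕ} (p q α : ℝ) (v w : (Fin d → ℝ) → ℝ) : ℝ≥0∞ :=
  ⨆ Q : Cube d,
    volume Q.toSet ^ (α / (d : ℝ) - 1) *
      (∫⁻ x in Q.toSet, ENNReal.ofReal (v x ^ (-(p / (p - 1)) / p))) ^ ((p - 1) / p) *
      (∫⁻ x in Q.toSet, ENNReal.ofReal (w x)) ^ (1 / q)

/-- The Muckenhoupt `A_∞` condition: `sup_Q exp(⨍_Q log w⁻¹) · ⨍_Q w < ∞`. -/
def IsAinfty {d : ℕ} (w : (Fin d → ℝ) → ℝ) : Prop :=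
  ∃ C : ℝ, ∀ Q : Cube d,
    Real.exp (⨍ x in Q.toSet, Real.log (w x)⁻¹ ∂volume) *
      (⨍ x in Q.toSet, w x ∂volume) ≤ C

/-- The Euclidean norm of a point of `ℝ^d`. -/
def euclNorm {d : ℕ} (x : Fin d → ℝ) : ℝ := Real.sqrt (∑ i, x i ^ 2)

/-- The auxiliary maximal operator `M_{T,λ}` controlling oscillations of truncations of `T`:
`M_{T,λ} f(x) = sup_{Q ∋ x} ess sup_{x',x'' ∈ Q} |T(fχ_{ℝ^d∖Q*})(x') − T(fχ_{ℝ^d∖Q*})(x'')|`. -/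
def MT {d : ℕ} (T : ((Fin d → ℝ) → ℝ) → (Fin d → ℝ) → ℝ) (lam : ℝ) (hlam : 0 < lam)
    (f : (Fin d → ℝ) → ℝ) (x : Fin d → ℝ) : ℝ≥0∞ :=
  ⨆ (Q : Cube d) (_ : x ∈ Q.toSet),
    essSup
      (fun z : (Fin d → ℝ) × (Fin d → ℝ) =>
        (‖T (((Q.dilate lam hlam).toSet)ᶜ.indicator f) z.1 -
            T (((Q.dilate lam hlam).toSet)ᶜ.indicator f) z.2‖₊ : ℝ≥0∞))
      ((volume.restrict Q.toSet).prod (volume.restrict Q.toSet))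

end


noncomputable section AuxProof

namespace Cube
variable {d : ℕ}

lemma corner_mem_toSet (Q : Cube d) : Q.corner ∈ Q.toSet :=
  fun i => ⟨le_refl _, by have := Q.side_pos; linarith⟩

lemma toSet_eq_pi (Q : Cube d) :
    Q.toSet = Set.pi Set.univ (fun i => Set.Ico (Q.corner i) (Q.corner i + Q.side)) := by
  ext y; simp [toSet, Set.mem_pi, Set.mem_Ico]

lemma measurableSet_toSet (Q : Cube d) : MeasurableSet Q.toSet := by
  rw [toSet_eq_pi]
  exact MeasurableSet.univ_pi fun i => measurableSet_Ico

lemma volume_toSet (Q : Cube d) :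
    volume Q.toSet = ENNReal.ofReal Q.side ^ d := by
  rw [toSet_eq_pi, volume_pi_pi]
  simp [Real.volume_Ico]

lemma volume_toSet_pos (Q : Cube d) : 0 < volume Q.toSet := by
  rw [volume_toSet]
  exact ENNReal.pow_pos (by simp [Q.side_pos]) d

lemma side_le_of_subset {Q R : Cube d} (hd : 0 < d) (h : Q.toSet ⊆ R.toSet) :
    Q.side ≤ R.side := by
  by_contra hlt
  push_neg at hlt
  obtain ⟨i⟩ := Fin.pos_iff_nonempty.mp hd
  set ε := (Q.side - R.side) / 2 with hε
  have hε0 : 0 < ε := by have := R.side_pos; simp [hε]; linarith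
  have hεs : ε < Q.side := by have := R.side_pos; simp [hε]; linarith
  set y : Fin d → ℝ := fun j => Q.corner j + (Q.side - ε)
  have hy : y ∈ Q.toSet := fun j => ⟨by simp [y]; linarith, by simp [y]; linarith⟩
  have hc := h Q.corner_mem_toSet i
  have hyR := h hy i
  have : Q.corner i + (Q.side - ε) < R.corner i + R.side := hyR.2
  have : Q.side - ε < R.side := by linarith [hc.1]
  simp [hε] at this; linarith

lemma translate_translate (Q : Cube d) (m m' : Fin d → ℤ) :
    (Q.translate m).translate m' = Q.translate (m + m') := by
  simp [translate]
  funext i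
  push_cast [Pi.add_apply]
  ring

end Cube

namespace DyadicLattice
variable {d : ℕ} (D : DyadicLattice d)

lemma gen_eq_translates {k : ℤ} {Q : Cube d} (hQ : Q ∈ D.gen k) :
    D.gen k = {R | ∃ m : Fin d → ℤ, R = Q.translate m} := by
  obtain ⟨Q₀, hQ₀, hgen⟩ := D.gen_translates k
  obtain ⟨m₀, hm₀⟩ : ∃ m : Fin d → ℤ, Q = Q₀.translate m := by rw [hgen] at hQ; exact hQ
  rw [hgen]; ext R; constructor
  · rintro ⟨m, rfl⟩
    exact ⟨m - m₀, by rw [hm₀, Cube.translate_translate]; congr 1; abel⟩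
  · rintro ⟨m, rfl⟩
    exact ⟨m₀ + m, by rw [hm₀, Cube.translate_translate]⟩

lemma side_eq_of_mem_gen {k : ℤ} {Q R : Cube d} (hQ : Q ∈ D.gen k) (hR : R ∈ D.gen k) :
    Q.side = R.side := by
  rw [D.gen_eq_translates hQ] at hR
  obtain ⟨m, rfl⟩ := hR; rfl

lemma exists_unique_mem_gen (k : ℤ) (x : Fin d → ℝ) :
    ∃! Q, Q ∈ D.gen k ∧ x ∈ Q.toSet := by
  obtain ⟨Q₀, hQ₀, hgen⟩ := D.gen_translates k
  set s := Q₀.side with hs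
  have hs0 : 0 < s := Q₀.side_pos
  set m : Fin d → ℤ := fun i => ⌊(x i - Q₀.corner i) / s⌋ with hm
  refine ⟨Q₀.translate m, ⟨by rw [hgen]; exact ⟨m, rfl⟩, ?_⟩, ?_⟩
  · intro i
    have h1 : (m i : ℝ) ≤ (x i - Q₀.corner i) / s := Int.floor_le _
    have h2 : (x i - Q₀.corner i) / s < m i + 1 := Int.lt_floor_add_one _
    have hcan : s * ((x i - Q₀.corner i) / s) = x i - Q₀.corner i := by field_simp
    constructor
    · have := mul_le_mul_of_nonneg_left h1 hs0.le
      rw [hcan] at this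
      simp only [Cube.translate]; linarith
    · have := mul_lt_mul_of_pos_left h2 hs0
      rw [hcan] at this
      simp only [Cube.translate]; nlinarith
  · rintro R ⟨hRg, hxR⟩
    rw [hgen] at hRg
    obtain ⟨m', rfl⟩ := hRg
    congr 1
    funext i
    have hA := hxR i
    simp only [Cube.translate] at hA
    have h1 : (m i : ℝ) ≤ (x i - Q₀.corner i) / s := Int.floor_le _
    have h2 : (x i - Q₀.corner i) / s < m i + 1 := Int.lt_floor_add_one _
    have hlt1 : (m' i : ℝ) < m i + 1 := by
      have : s * m' i ≤ x i - Q₀.corner i := by linarith [hA.1]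
      have : (m' i : ℝ) ≤ (x i - Q₀.corner i) / s := (le_div_iff₀ hs0).mpr (by linarith)
      linarith
    have hlt2 : (m i : ℝ) < m' i + 1 := by
      have : x i - Q₀.corner i < s * m' i + s := by linarith [hA.2]
      have : (x i - Q₀.corner i) / s < m' i + 1 := (div_lt_iff₀ hs0).mpr (by linarith)
      linarith
    have : m' i ≤ m i := by exact_mod_cast Int.lt_add_one_iff.mp (by exact_mod_cast hlt1)
    have : m i ≤ m' i := by exact_mod_cast Int.lt_add_one_iff.mp (by exact_mod_cast hlt2)
    omega

lemma disjoint_of_mem_gen {k : ℤ} {Q R : Cube d} (hQ : Q ∈ D.gen k) (hR : R ∈ D.gen k)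
    (hne : Q ≠ R) : Disjoint Q.toSet R.toSet := by
  rw [Set.disjoint_left]
  intro x hxQ hxR
  obtain ⟨U, _, hU⟩ := D.exists_unique_mem_gen k x
  exact hne ((hU Q ⟨hQ, hxQ⟩).trans (hU R ⟨hR, hxR⟩).symm)

/-- the unique cube of generation k containing x -/
def cubeAt (k : ℤ) (x : Fin d → ℝ) : Cube d :=
  (D.exists_unique_mem_gen k x).choose

lemma cubeAt_mem_gen (k : ℤ) (x : Fin d → ℝ) : D.cubeAt k x ∈ D.gen k :=
  (D.exists_unique_mem_gen k x).choose_spec.1.1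

lemma mem_cubeAt (k : ℤ) (x : Fin d → ℝ) : x ∈ (D.cubeAt k x).toSet :=
  (D.exists_unique_mem_gen k x).choose_spec.1.2

lemma cubeAt_unique {k : ℤ} {x : Fin d → ℝ} {Q : Cube d} (hQ : Q ∈ D.gen k)
    (hx : x ∈ Q.toSet) : Q = D.cubeAt k x :=
  (D.exists_unique_mem_gen k x).choose_spec.2 Q ⟨hQ, hx⟩

/-- the common sidelength of generation k -/
def genSide (k : ℤ) : ℝ := (D.gen_translates k).choose.side

lemma genSide_pos (k : ℤ) : 0 < D.genSide k := (D.gen_translates k).choose.side_pos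

lemma side_eq_genSide {k : ℤ} {Q : Cube d} (hQ : Q ∈ D.gen k) : Q.side = D.genSide k :=
  D.side_eq_of_mem_gen hQ (D.gen_translates k).choose_spec.1

lemma genSide_succ (k : ℤ) : D.genSide (k + 1) = D.genSide k / 2 := by
  obtain ⟨Q, hQ, hcc⟩ := D.cornerChild_mem k
  have h1 : Q.cornerChild.side = D.genSide (k + 1) := D.side_eq_genSide hcc
  have h2 : Q.side = D.genSide k := D.side_eq_genSide hQ
  simp only [Cube.cornerChild] at h1
  rw [← h1, ← h2]

lemma genSide_strict_anti {k k' : ℤ} (h : k < k') : D.genSide k' < D.genSide k := by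
  have key : ∀ n : ℕ, D.genSide (k + 1 + n) ≤ D.genSide (k + 1) := by
    intro n
    induction n with
    | zero => simp
    | succ n ih =>
        have h2 : D.genSide (k + 1 + (n+1:ℕ)) = D.genSide (k + 1 + n) / 2 := by
          rw [show (k + 1 + ((n+1:ℕ):ℤ)) = (k + 1 + n) + 1 by push_cast; ring, D.genSide_succ]
        rw [h2]
        have := D.genSide_pos (k + 1 + n)
        linarith
  have hk' : k' = k + 1 + ((k' - k - 1).toNat : ℤ) := by omega
  have h3 := key (k' - k - 1).toNat
  rw [← hk'] at h3
  calc D.genSide k' ≤ D.genSide (k+1) := h3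
    _ = D.genSide k / 2 := D.genSide_succ k
    _ < D.genSide k := by have := D.genSide_pos k; linarith

/-- each cube of generation k+1 has a parent in generation k -/
lemma exists_parent (k : ℤ) {R : Cube d} (hR : R ∈ D.gen (k + 1)) :
    ∃ P ∈ D.gen k, R.toSet ⊆ P.toSet := by
  obtain ⟨Q, hQ, hcc⟩ := D.cornerChild_mem k
  rw [D.gen_eq_translates hcc] at hR
  obtain ⟨m, rfl⟩ := hR
  refine ⟨Q.translate (fun i => (m i).ediv 2), ?_, ?_⟩
  · rw [D.gen_eq_translates hQ]; exact ⟨_, rfl⟩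
  · intro y hy i
    have hyi := hy i
    simp only [Cube.translate, Cube.cornerChild, Cube.toSet, Set.mem_setOf_eq] at hyi ⊢
    have hs := Q.side_pos
    have hdiv : (m i) = 2 * (m i).ediv 2 + (m i).emod 2 := (Int.mul_ediv_add_emod (m i) 2).symm
    have hmod : (m i).emod 2 = 0 ∨ (m i).emod 2 = 1 := by
      have h1 : 0 ≤ (m i).emod 2 := Int.emod_nonneg _ (by norm_num)
      have h2 : (m i).emod 2 < 2 := Int.emod_lt_of_pos _ (by norm_num)
      omega
    have hcast : ((m i : ℝ)) = 2 * ((m i).ediv 2 : ℝ) + ((m i).emod 2 : ℝ) := by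
      exact_mod_cast congrArg (Int.cast : ℤ → ℝ) hdiv
    rcases hmod with h | h <;> rw [h] at hcast <;> push_cast at hcast <;>
      constructor <;> nlinarith [hyi.1, hyi.2]

lemma cubeAt_succ_subset (k : ℤ) (x : Fin d → ℝ) :
    (D.cubeAt (k+1) x).toSet ⊆ (D.cubeAt k x).toSet := by
  obtain ⟨P, hP, hsub⟩ := D.exists_parent k (D.cubeAt_mem_gen (k+1) x)
  have hxP : x ∈ P.toSet := hsub (D.mem_cubeAt (k+1) x)
  rwa [D.cubeAt_unique hP hxP] at hsub

lemma cubeAt_subset {k k' : ℤ} (h : k ≤ k') (x : Fin d → ℝ) :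
    (D.cubeAt k' x).toSet ⊆ (D.cubeAt k x).toSet := by
  have key : ∀ n : ℕ, (D.cubeAt (k + n) x).toSet ⊆ (D.cubeAt k x).toSet := by
    intro n
    induction n with
    | zero => simp
    | succ n ih =>
        have h1 : (D.cubeAt (k + n + 1) x).toSet ⊆ (D.cubeAt (k + n) x).toSet :=
          D.cubeAt_succ_subset (k + n) x
        rw [show (k + ((n+1:ℕ):ℤ)) = (k + n) + 1 by push_cast; ring]
        exact h1.trans ih
  have hk' : k' = k + ((k' - k).toNat : ℤ) := by omega
  rw [hk']
  exact key _

/-- two dyadic cubes are nested or disjoint -/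
lemma subset_or_disjoint {k k' : ℤ} (h : k ≤ k') {Q R : Cube d}
    (hQ : Q ∈ D.gen k) (hR : R ∈ D.gen k') :
    R.toSet ⊆ Q.toSet ∨ Disjoint Q.toSet R.toSet := by
  set x := R.corner
  have hRx : R = D.cubeAt k' x := D.cubeAt_unique hR R.corner_mem_toSet
  have hsub : R.toSet ⊆ (D.cubeAt k x).toSet := by
    rw [hRx]; exact D.cubeAt_subset h x
  by_cases hQx : Q = D.cubeAt k x
  · left; rw [hQx]; exact hsub
  · right
    exact (D.disjoint_of_mem_gen hQ (D.cubeAt_mem_gen k x) hQx).mono_right hsub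

lemma gen_countable (k : ℤ) : (D.gen k).Countable := by
  obtain ⟨Q₀, hQ₀, hgen⟩ := D.gen_translates k
  rw [hgen]
  have : {R : Cube d | ∃ m : Fin d → ℤ, R = Q₀.translate m} ⊆
      Set.range (fun m : Fin d → ℤ => Q₀.translate m) := by
    rintro R ⟨m, rfl⟩; exact ⟨m, rfl⟩
  exact (Set.countable_range _).mono this

lemma cubes_countable : D.cubes.Countable :=
  Set.countable_iUnion fun k => D.gen_countable k

lemma mem_cubes_iff {Q : Cube d} : Q ∈ D.cubes ↔ ∃ k, Q ∈ D.gen k := Set.mem_iUnion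

end DyadicLattice

section Meas
variable {d : ℕ} {w : (Fin d → ℝ) → ℝ}

lemma aemeas_w (hw : IsWeight w) :
    AEMeasurable (fun x => ENNReal.ofReal (w x)) (volume : Measure (Fin d → ℝ)) :=
  ENNReal.measurable_ofReal.comp_aemeasurable hw.1.aestronglyMeasurable.aemeasurable

lemma wMeasure_apply (hw : IsWeight w) {E : Set (Fin d → ℝ)} (hE : MeasurableSet E) :
    wMeasure w E = wInt w E := withDensity_apply _ hE

lemma lintegral_mul_w (hw : IsWeight w) {E : Set (Fin d → ℝ)} (hE : MeasurableSet E)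
    (g : (Fin d → ℝ) → ℝ≥0∞) :
    ∫⁻ y in E, g y * ENNReal.ofReal (w y) = ∫⁻ y in E, g y ∂(wMeasure w) := by
  rw [wMeasure, restrict_withDensity hE,
    lintegral_withDensity_eq_lintegral_mul_non_measurable₀ _
      ((aemeas_w hw).restrict) (Filter.Eventually.of_forall fun x => ENNReal.ofReal_lt_top) g]
  congr 1
  funext y
  simp [mul_comm]

lemma wMeasure_cube_pos (hw : IsWeight w) (Q : Cube d) : 0 < wMeasure w Q.toSet := by
  rw [wMeasure_apply hw Q.measurableSet_toSet]
  by_contra h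
  push_neg at h
  have h0 : wInt w Q.toSet = 0 := le_antisymm h zero_le
  rw [wInt, lintegral_eq_zero_iff' ((aemeas_w hw).restrict)] at h0
  have hpos : ∀ᵐ x ∂(volume.restrict Q.toSet), 0 < w x := ae_restrict_of_ae hw.2
  have hfalse : ∀ᵐ x ∂(volume.restrict Q.toSet), False := by
    filter_upwards [h0, hpos] with x hx hx'
    simp only [Pi.zero_apply] at hx
    exact (ENNReal.ofReal_pos.mpr hx').ne' hx
  have hzero : volume.restrict Q.toSet Set.univ = 0 := by
    simpa using hfalse
  rw [Measure.restrict_apply_univ] at hzero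
  exact (Q.volume_toSet_pos).ne' hzero

lemma wMeasure_cube_lt_top (hw : IsWeight w) (Q : Cube d) : wMeasure w Q.toSet < ∞ := by
  have hsub : Q.toSet ⊆ Set.Icc Q.corner (fun i => Q.corner i + Q.side) := by
    intro y hy
    constructor <;> intro i
    · exact (hy i).1
    · exact (hy i).2.le
  have hint : IntegrableOn w (Set.Icc Q.corner (fun i => Q.corner i + Q.side)) volume :=
    hw.1.integrableOn_isCompact isCompact_Icc
  rw [wMeasure_apply hw Q.measurableSet_toSet]
  calc wInt w Q.toSet
      ≤ ∫⁻ x in Set.Icc Q.corner (fun i => Q.corner i + Q.side), ENNReal.ofReal (w x) :=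
        lintegral_mono_set hsub
    _ ≤ ∫⁻ x in Set.Icc Q.corner (fun i => Q.corner i + Q.side), (‖w x‖₊ : ℝ≥0∞) :=
        lintegral_mono fun x => Real.ofReal_le_enorm _
    _ < ∞ := hint.hasFiniteIntegral

end Meas

section Quadrant
variable {d : ℕ} (D : DyadicLattice d)

lemma quadrant_eq_iUnion (x : Fin d → ℝ) :
    D.quadrant x = ⋃ n : ℕ, (D.cubeAt (-(n:ℤ)) x).toSet := by
  apply Set.Subset.antisymm
  · intro y hy
    simp only [DyadicLattice.quadrant, Set.mem_iUnion] at hy ⊢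
    obtain ⟨Q, ⟨hQc, hxQ⟩, hyQ⟩ := hy
    obtain ⟨k, hk⟩ := D.mem_cubes_iff.mp hQc
    have hQeq : Q = D.cubeAt k x := D.cubeAt_unique hk hxQ
    refine ⟨(-k).toNat, ?_⟩
    have hle : -(((-k).toNat : ℕ) : ℤ) ≤ k := by omega
    exact D.cubeAt_subset hle x (hQeq ▸ hyQ)
  · intro y hy
    simp only [Set.mem_iUnion] at hy
    obtain ⟨n, hn⟩ := hy
    simp only [DyadicLattice.quadrant, Set.mem_iUnion]
    exact ⟨D.cubeAt (-(n:ℤ)) x, ⟨D.mem_cubes_iff.mpr ⟨_, D.cubeAt_mem_gen _ x⟩,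
      D.mem_cubeAt _ x⟩, hn⟩

lemma measurableSet_quadrant (x : Fin d → ℝ) : MeasurableSet (D.quadrant x) := by
  rw [quadrant_eq_iUnion]
  exact MeasurableSet.iUnion fun n => (D.cubeAt _ x).measurableSet_toSet

/-- existence of an ancestor of large weighted measure -/
lemma exists_big_ancestor {w : (Fin d → ℝ) → ℝ} (hw : IsWeight w)
    (hquad : ∀ x : Fin d → ℝ, wInt w (D.quadrant x) = ∞)
    (x : Fin d → ℝ) {B : ℝ≥0∞} (hB : B ≠ ∞) (k₀ : ℤ) :
    ∃ k ≤ k₀, B < wMeasure w (D.cubeAt k x).toSet := by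
  have hmono : Monotone (fun n : ℕ => (D.cubeAt (-(n:ℤ)) x).toSet) := by
    intro n n' hnn'
    exact D.cubeAt_subset (by omega) x
  have hq : wMeasure w (D.quadrant x) = ∞ := by
    rw [wMeasure_apply hw (measurableSet_quadrant D x)]
    exact hquad x
  rw [quadrant_eq_iUnion, hmono.measure_iUnion] at hq
  have : B < ⨆ n : ℕ, wMeasure w (D.cubeAt (-(n:ℤ)) x).toSet := by
    rw [hq]; exact lt_of_le_of_ne le_top hB
  obtain ⟨n, hn⟩ := lt_iSup_iff.mp this
  refine ⟨min (-(n:ℤ)) k₀, min_le_right _ _, ?_⟩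
  exact hn.trans_le (measure_mono (D.cubeAt_subset (min_le_left _ _) x))

end Quadrant

section Key
variable {d : ℕ} {w : (Fin d → ℝ) → ℝ}

/-- the central Hölder-type estimate on a single cube -/
lemma key_ineq (hw : IsWeight w) {p : ℝ≥0∞} (hp : 1 ≤ p)
    {f : (Fin d → ℝ) → ℝ} (hfm : AEStronglyMeasurable f (wMeasure w)) (α : ℝ) (Q : Cube d) :
    wMeasure w Q.toSet ^ (α/(d:ℝ) - 1) * ∫⁻ y in Q.toSet, (‖f y‖₊ : ℝ≥0∞) ∂(wMeasure w)
      ≤ eLpNorm f p ((wMeasure w).restrict Q.toSet) *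
        wMeasure w Q.toSet ^ (α/(d:ℝ) - 1/p.toReal) := by
  set ν := wMeasure w with hν
  set a := ν Q.toSet with ha
  have ha0 : a ≠ 0 := (wMeasure_cube_pos hw Q).ne'
  have haT : a ≠ ∞ := (wMeasure_cube_lt_top hw Q).ne
  have hI : ∫⁻ y in Q.toSet, (‖f y‖₊ : ℝ≥0∞) ∂ν = eLpNorm f 1 (ν.restrict Q.toSet) := by
    exact (eLpNorm_one_eq_lintegral_enorm (f := f)).symm
  have hHolder : eLpNorm f 1 (ν.restrict Q.toSet) ≤
      eLpNorm f p (ν.restrict Q.toSet) * a ^ (1 - 1/p.toReal) := by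
    have h := eLpNorm_le_eLpNorm_mul_rpow_measure_univ (μ := ν.restrict Q.toSet) hp
      (hfm.restrict)
    rw [Measure.restrict_apply_univ] at h
    simpa using h
  calc a ^ (α/(d:ℝ) - 1) * ∫⁻ y in Q.toSet, (‖f y‖₊ : ℝ≥0∞) ∂ν
      ≤ a ^ (α/(d:ℝ) - 1) * (eLpNorm f p (ν.restrict Q.toSet) * a ^ (1 - 1/p.toReal)) := by
        rw [hI]; exact mul_le_mul_right hHolder _
    _ = eLpNorm f p (ν.restrict Q.toSet) * (a ^ (α/(d:ℝ) - 1) * a ^ (1 - 1/p.toReal)) := by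
        ring
    _ = eLpNorm f p (ν.restrict Q.toSet) * a ^ (α/(d:ℝ) - 1/p.toReal) := by
        rw [← ENNReal.rpow_add _ _ ha0 haT]
        congr 1
        ring

end Key

/-- `Σ aᵢ^r ≤ (Σ aᵢ)^r` for `r ≥ 1` in `ℝ≥0∞`. -/
lemma tsum_rpow_le {ι : Type*} (a : ι → ℝ≥0∞) {r : ℝ} (hr : 1 ≤ r) :
    ∑' i, a i ^ r ≤ (∑' i, a i) ^ r := by
  have hr0 : 0 < r := lt_of_lt_of_le one_pos hr
  set T := ∑' i, a i with hT
  rcases eq_or_ne T 0 with h0 | h0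
  · have : ∀ i, a i = 0 := by
      intro i
      exact le_antisymm (h0 ▸ ENNReal.le_tsum i) zero_le
    simp [this, ENNReal.zero_rpow_of_pos hr0]
  rcases eq_or_ne T ∞ with hT' | hT'
  · rw [hT', ENNReal.top_rpow_of_pos hr0]; exact le_top
  have key : ∀ i, a i ^ r ≤ a i * T ^ (r - 1) := by
    intro i
    rcases eq_or_ne (a i) 0 with h | h
    · simp [h, ENNReal.zero_rpow_of_pos hr0]
    · have haT : a i ≠ ∞ := fun hh => hT' (top_le_iff.mp (hh ▸ ENNReal.le_tsum i))
      calc a i ^ r = a i ^ (1 + (r - 1)) := by norm_num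
        _ = a i ^ (1:ℝ) * a i ^ (r - 1) := ENNReal.rpow_add _ _ h haT
        _ ≤ a i * T ^ (r - 1) := by
            rw [ENNReal.rpow_one]
            exact mul_le_mul_right (ENNReal.rpow_le_rpow (ENNReal.le_tsum i) (by linarith)) _
  calc ∑' i, a i ^ r ≤ ∑' i, a i * T ^ (r - 1) := ENNReal.tsum_le_tsum key
    _ = T * T ^ (r - 1) := ENNReal.tsum_mul_right
    _ = T ^ (1:ℝ) * T ^ (r - 1) := by rw [ENNReal.rpow_one]
    _ = T ^ r := by rw [← ENNReal.rpow_add _ _ h0 hT']; norm_num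

end AuxProof

/-- weak type estimate for the weighted dyadic fractional maximal operator. -/
theorem weak_type_weighted_dyadic_fractional_maximal
    {d : ℕ} (hd : 0 < d) (D : DyadicLattice d)
    (w : (Fin d → ℝ) → ℝ) (hw : IsWeight w)
    (hquad : ∀ x : Fin d → ℝ, wInt w (D.quadrant x) = ∞)
    (p q : ℝ≥0∞) (hp : 1 ≤ p) (hpq : p ≤ q)
    (α : ℝ) (hα0 : 0 ≤ α) (hαd : α ≤ d)
    (hexp : p⁻¹ = q⁻¹ + ENNReal.ofReal (α / d))
    (f : (Fin d → ℝ) → ℝ) (hf : MemLp f p (wMeasure w)) :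
    wnormENN (MwDyadic D α w f) q (wMeasure w) ≤ eLpNorm f p (wMeasure w) := by
  classical
  have hfm : AEStronglyMeasurable f (wMeasure w) := hf.1
  have hNtop : eLpNorm f p (wMeasure w) ≠ ∞ := hf.2.ne
  have hd0 : (0:ℝ) < d := Nat.cast_pos.mpr hd
  have hαd' : 0 ≤ α / (d:ℝ) := div_nonneg hα0 hd0.le
  have hp0 : p ≠ 0 := (lt_of_lt_of_le zero_lt_one hp).ne'
  set term : Cube d → ℝ≥0∞ := fun Q =>
    wMeasure w Q.toSet ^ (α/(d:ℝ) - 1) * ∫⁻ y in Q.toSet, (‖f y‖₊ : ℝ≥0∞) ∂(wMeasure w)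
    with hterm
  have hMw : ∀ x, MwDyadic D α w f x =
      ⨆ Q, ⨆ (_ : Q ∈ D.cubes), ⨆ (_ : x ∈ Q.toSet), term Q := by
    intro x
    unfold MwDyadic
    refine iSup_congr fun Q => iSup_congr fun _ => iSup_congr fun _ => ?_
    rw [← wMeasure_apply hw Q.measurableSet_toSet,
      lintegral_mul_w hw Q.measurableSet_toSet (fun y => (‖f y‖₊ : ℝ≥0∞))]
  rcases eq_or_ne q ∞ with hq | hq
  -- Case q = ∞ : pointwise bound
  · rw [wnormENN, if_pos hq]
    refine essSup_le_of_ae_le _ (Filter.Eventually.of_forall fun x => ?_)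
    rw [hMw x]
    refine iSup_le fun Q => iSup_le fun _ => iSup_le fun _ => ?_
    have hkey := key_ineq hw hp hfm α Q
    have hexp0 : α/(d:ℝ) - 1/p.toReal = 0 := by
      rcases eq_or_ne p ∞ with hpT | hpT
      · have h0 : ENNReal.ofReal (α/(d:ℝ)) = 0 := by
          rw [hpT, hq] at hexp
          simpa using hexp.symm
        have hle : α / (d:ℝ) ≤ 0 := ENNReal.ofReal_eq_zero.mp h0
        have hz : α/(d:ℝ) = 0 := le_antisymm hle hαd'
        rw [hz, hpT]
        simp
      · have h1 : (p⁻¹).toReal = (ENNReal.ofReal (α/(d:ℝ))).toReal := by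
          rw [hq] at hexp
          rw [hexp]
          simp
        rw [ENNReal.toReal_inv, ENNReal.toReal_ofReal hαd'] at h1
        rw [← h1]
        simp [one_div]
    rw [hexp0, ENNReal.rpow_zero, mul_one] at hkey
    exact hkey.trans (eLpNorm_mono_measure f Measure.restrict_le_self)
  -- Case q < ∞
  · have hq0 : q ≠ 0 := (lt_of_lt_of_le zero_lt_one (hp.trans hpq)).ne'
    have hqR : 0 < q.toReal := ENNReal.toReal_pos hq0 hq
    have hpT : p ≠ ∞ := fun h => hq (top_le_iff.mp (h ▸ hpq))
    have hpR : 0 < p.toReal := ENNReal.toReal_pos hp0 hpT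
    have hexpR : 1/p.toReal = 1/q.toReal + α/(d:ℝ) := by
      have h1 : (p⁻¹).toReal = (q⁻¹ + ENNReal.ofReal (α/(d:ℝ))).toReal := by rw [hexp]
      rw [ENNReal.toReal_add (ENNReal.inv_ne_top.mpr hq0) ENNReal.ofReal_ne_top,
        ENNReal.toReal_inv, ENNReal.toReal_inv, ENNReal.toReal_ofReal hαd'] at h1
      simpa [one_div] using h1
    have hexp2 : α/(d:ℝ) - 1/p.toReal = -(1/q.toReal) := by linarith
    rw [wnormENN, if_neg hq]
    refine iSup_le fun t => ?_
    rcases eq_or_ne (t:ℝ≥0∞) 0 with ht | ht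
    · rw [ht, zero_mul]; exact zero_le
    set S : Set (Cube d) := {Q | Q ∈ D.cubes ∧ (t:ℝ≥0∞) < term Q} with hS
    have hSbound : ∀ Q ∈ S, (t:ℝ≥0∞) * wMeasure w Q.toSet ^ (1/q.toReal)
        ≤ eLpNorm f p ((wMeasure w).restrict Q.toSet) := by
      intro Q hQ
      have ha0 : wMeasure w Q.toSet ≠ 0 := (wMeasure_cube_pos hw Q).ne'
      have haT : wMeasure w Q.toSet ≠ ∞ := (wMeasure_cube_lt_top hw Q).ne
      have h1 : (t:ℝ≥0∞) ≤ eLpNorm f p ((wMeasure w).restrict Q.toSet) *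
          wMeasure w Q.toSet ^ (-(1/q.toReal)) := by
        have h2 := key_ineq hw hp hfm α Q
        rw [hexp2] at h2
        exact (le_of_lt hQ.2).trans h2
      calc (t:ℝ≥0∞) * wMeasure w Q.toSet ^ (1/q.toReal)
          ≤ (eLpNorm f p ((wMeasure w).restrict Q.toSet) *
              wMeasure w Q.toSet ^ (-(1/q.toReal))) * wMeasure w Q.toSet ^ (1/q.toReal) :=
            mul_le_mul_left h1 _
        _ = eLpNorm f p ((wMeasure w).restrict Q.toSet) *
              (wMeasure w Q.toSet ^ (-(1/q.toReal)) * wMeasure w Q.toSet ^ (1/q.toReal)) := by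
            rw [mul_assoc]
        _ = eLpNorm f p ((wMeasure w).restrict Q.toSet) := by
            rw [← ENNReal.rpow_add _ _ ha0 haT]
            norm_num
    set B : ℝ≥0∞ := (eLpNorm f p (wMeasure w) / t) ^ q.toReal with hBdef
    have hB : B ≠ ∞ :=
      (ENNReal.rpow_lt_top_of_nonneg hqR.le (ENNReal.div_lt_top hNtop ht).ne).ne
    have hSmeas : ∀ Q ∈ S, wMeasure w Q.toSet ≤ B := by
      intro Q hQ
      have h1 := hSbound Q hQ
      have h2 : eLpNorm f p ((wMeasure w).restrict Q.toSet) ≤ eLpNorm f p (wMeasure w) :=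
        eLpNorm_mono_measure f Measure.restrict_le_self
      have h3 : wMeasure w Q.toSet ^ (1/q.toReal) ≤ eLpNorm f p (wMeasure w) / t :=
        (ENNReal.le_div_iff_mul_le (Or.inl ht) (Or.inl ENNReal.coe_ne_top)).mpr
          (by rw [mul_comm]; exact h1.trans h2)
      calc wMeasure w Q.toSet
          = (wMeasure w Q.toSet ^ (1/q.toReal)) ^ q.toReal := by
            rw [← ENNReal.rpow_mul, one_div_mul_cancel hqR.ne', ENNReal.rpow_one]
        _ ≤ B := ENNReal.rpow_le_rpow h3 hqR.le
    -- the level set is covered by the cubes of S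
    have hlevel : {x | (t:ℝ≥0∞) < MwDyadic D α w f x} = ⋃ Q ∈ S, Q.toSet := by
      ext x
      simp only [Set.mem_setOf_eq, hMw x, lt_iSup_iff, Set.mem_iUnion, hS]
      constructor
      · rintro ⟨Q, hQ, hx, hlt⟩
        exact ⟨Q, ⟨hQ, hlt⟩, hx⟩
      · rintro ⟨Q, ⟨hQ, hlt⟩, hx⟩
        exact ⟨Q, hQ, hx, hlt⟩
    -- maximal cubes
    set MM : Set (Cube d) := {Q | Q ∈ S ∧ ∀ R ∈ S, Q.toSet ⊆ R.toSet → R = Q} with hMM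
    have hcover : ∀ Q ∈ S, ∃ R ∈ MM, Q.toSet ⊆ R.toSet := by
      intro Q hQ
      obtain ⟨k₀, hk₀⟩ := D.mem_cubes_iff.mp hQ.1
      set x := Q.corner with hxdef
      have hQx : Q = D.cubeAt k₀ x := D.cubeAt_unique hk₀ Q.corner_mem_toSet
      obtain ⟨kb, hkb, hkbig⟩ := exists_big_ancestor D hw hquad x hB k₀
      set A : Finset ℤ := (Finset.Icc kb k₀).filter (fun k => D.cubeAt k x ∈ S) with hA
      have hk₀A : k₀ ∈ A := by
        rw [hA, Finset.mem_filter, Finset.mem_Icc]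
        exact ⟨⟨hkb, le_refl _⟩, hQx ▸ hQ⟩
      have hAne : A.Nonempty := ⟨k₀, hk₀A⟩
      set kmin := A.min' hAne with hkmin
      have hkminA : kmin ∈ A := A.min'_mem hAne
      rw [hA, Finset.mem_filter, Finset.mem_Icc] at hkminA
      refine ⟨D.cubeAt kmin x, ⟨hkminA.2, ?_⟩, ?_⟩
      · intro R' hR' hsub
        obtain ⟨k', hk'⟩ := D.mem_cubes_iff.mp hR'.1
        have hside : D.genSide kmin ≤ D.genSide k' := by
          rw [← D.side_eq_genSide (D.cubeAt_mem_gen kmin x), ← D.side_eq_genSide hk']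
          exact Cube.side_le_of_subset hd hsub
        have hk'le : k' ≤ kmin := by
          by_contra hlt
          push_neg at hlt
          exact absurd hside (not_le.mpr (D.genSide_strict_anti hlt))
        have hR'x : R' = D.cubeAt k' x := D.cubeAt_unique hk' (hsub (D.mem_cubeAt kmin x))
        have hk'ge : kb ≤ k' := by
          by_contra hlt
          push_neg at hlt
          have hsub2 : (D.cubeAt kb x).toSet ⊆ R'.toSet := by
            rw [hR'x]; exact D.cubeAt_subset hlt.le x
          have hbig : B < wMeasure w R'.toSet := hkbig.trans_le (measure_mono hsub2)
          exact absurd (hSmeas R' hR') (not_le.mpr hbig)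
        have hk'A : k' ∈ A := by
          rw [hA, Finset.mem_filter, Finset.mem_Icc]
          exact ⟨⟨hk'ge, hk'le.trans hkminA.1.2⟩, hR'x ▸ hR'⟩
        have hge : kmin ≤ k' := A.min'_le _ hk'A
        rw [hR'x]
        congr 1
        omega
      · rw [hQx]; exact D.cubeAt_subset hkminA.1.2 x
    have hdisj : MM.PairwiseDisjoint Cube.toSet := by
      intro Q hQ R hR hne
      obtain ⟨k, hk⟩ := D.mem_cubes_iff.mp hQ.1.1
      obtain ⟨k', hk'⟩ := D.mem_cubes_iff.mp hR.1.1
      rcases le_total k k' with hkk | hkk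
      · rcases D.subset_or_disjoint hkk hk hk' with hsub | hdis
        · exact absurd (hR.2 Q hQ.1 hsub) hne
        · exact hdis
      · rcases D.subset_or_disjoint hkk hk' hk with hsub | hdis
        · exact absurd (hQ.2 R hR.1 hsub) hne.symm
        · exact hdis.symm
    have hMMc : MM.Countable := D.cubes_countable.mono fun Q hQ => hQ.1.1
    haveI : Countable ↥MM := hMMc.to_subtype
    have hmeas_level : wMeasure w {x | (t:ℝ≥0∞) < MwDyadic D α w f x}
        ≤ ∑' Q : MM, wMeasure w (Q:Cube d).toSet := by
      rw [hlevel]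
      refine (measure_mono ?_).trans (measure_biUnion_le (wMeasure w) hMMc Cube.toSet)
      intro y hy
      simp only [Set.mem_iUnion] at hy ⊢
      obtain ⟨Q, hQ, hyQ⟩ := hy
      obtain ⟨R, hR, hsub⟩ := hcover Q hQ
      exact ⟨R, hR, hsub hyQ⟩
    set r : ℝ := q.toReal / p.toReal with hrdef
    have hr1 : 1 ≤ r := by
      rw [hrdef, le_div_iff₀ hpR]
      simpa using ENNReal.toReal_mono hq hpq
    have hNpow : eLpNorm f p (wMeasure w) ^ p.toReal
        = ∫⁻ y, (‖f y‖₊ : ℝ≥0∞) ^ p.toReal ∂(wMeasure w) := by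
      rw [eLpNorm_eq_lintegral_rpow_enorm_toReal hp0 hpT, ← ENNReal.rpow_mul,
        one_div_mul_cancel hpR.ne', ENNReal.rpow_one]
      simp only [enorm_eq_nnnorm]
    have hstep : ∀ Q : MM, (t:ℝ≥0∞)^q.toReal * wMeasure w (Q:Cube d).toSet
        ≤ (∫⁻ y in (Q:Cube d).toSet, (‖f y‖₊ : ℝ≥0∞)^p.toReal ∂(wMeasure w)) ^ r := by
      intro Q
      have h1 := hSbound (Q:Cube d) Q.2.1
      have h2 : ((t:ℝ≥0∞) * wMeasure w (Q:Cube d).toSet ^ (1/q.toReal)) ^ q.toReal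
          ≤ (eLpNorm f p ((wMeasure w).restrict (Q:Cube d).toSet)) ^ q.toReal :=
        ENNReal.rpow_le_rpow h1 hqR.le
      have h3 : ((t:ℝ≥0∞) * wMeasure w (Q:Cube d).toSet ^ (1/q.toReal)) ^ q.toReal
          = (t:ℝ≥0∞)^q.toReal * wMeasure w (Q:Cube d).toSet := by
        rw [ENNReal.mul_rpow_of_nonneg _ _ hqR.le, ← ENNReal.rpow_mul,
          one_div_mul_cancel hqR.ne', ENNReal.rpow_one]
      have h4 : (eLpNorm f p ((wMeasure w).restrict (Q:Cube d).toSet)) ^ q.toReal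
          = (∫⁻ y in (Q:Cube d).toSet, (‖f y‖₊ : ℝ≥0∞)^p.toReal ∂(wMeasure w)) ^ r := by
        rw [eLpNorm_eq_lintegral_rpow_enorm_toReal hp0 hpT, ← ENNReal.rpow_mul]
        congr 1
        rw [hrdef]
        field_simp
      rw [h3, h4] at h2
      exact h2
    have hsum : (∑' Q : MM, ∫⁻ y in (Q:Cube d).toSet, (‖f y‖₊ : ℝ≥0∞)^p.toReal ∂(wMeasure w))
        ≤ ∫⁻ y, (‖f y‖₊ : ℝ≥0∞)^p.toReal ∂(wMeasure w) := by
      have hpd : Pairwise (Function.onFun Disjoint fun Q : MM => (Q:Cube d).toSet) := by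
        intro i j hij
        exact hdisj i.2 j.2 (fun h => hij (Subtype.ext h))
      rw [← lintegral_iUnion (fun Q : MM => (Q:Cube d).measurableSet_toSet) hpd]
      exact setLIntegral_le_lintegral _ _
    have hfinal : (t:ℝ≥0∞)^q.toReal * ∑' Q : MM, wMeasure w (Q:Cube d).toSet
        ≤ (eLpNorm f p (wMeasure w)) ^ q.toReal := by
      rw [← ENNReal.tsum_mul_left]
      calc ∑' Q : MM, (t:ℝ≥0∞)^q.toReal * wMeasure w (Q:Cube d).toSet
          ≤ ∑' Q : MM, (∫⁻ y in (Q:Cube d).toSet, (‖f y‖₊ : ℝ≥0∞)^p.toReal ∂(wMeasure w)) ^ r :=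
            ENNReal.tsum_le_tsum hstep
        _ ≤ (∑' Q : MM, ∫⁻ y in (Q:Cube d).toSet, (‖f y‖₊ : ℝ≥0∞)^p.toReal ∂(wMeasure w)) ^ r :=
            tsum_rpow_le _ hr1
        _ ≤ (∫⁻ y, (‖f y‖₊ : ℝ≥0∞)^p.toReal ∂(wMeasure w)) ^ r :=
            ENNReal.rpow_le_rpow hsum (by positivity)
        _ = (eLpNorm f p (wMeasure w)) ^ q.toReal := by
            rw [← hNpow, ← ENNReal.rpow_mul]
            congr 1
            rw [hrdef]
            field_simp
    calc (t:ℝ≥0∞) * wMeasure w {x | (t:ℝ≥0∞) < MwDyadic D α w f x} ^ (1/q.toReal)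
        ≤ (t:ℝ≥0∞) * (∑' Q : MM, wMeasure w (Q:Cube d).toSet) ^ (1/q.toReal) :=
          mul_le_mul_right (ENNReal.rpow_le_rpow hmeas_level (by positivity)) _
      _ = ((t:ℝ≥0∞)^q.toReal * ∑' Q : MM, wMeasure w (Q:Cube d).toSet) ^ (1/q.toReal) := by
          rw [ENNReal.mul_rpow_of_nonneg _ _ (by positivity), ← ENNReal.rpow_mul,
            mul_one_div_cancel hqR.ne', ENNReal.rpow_one]
      _ ≤ ((eLpNorm f p (wMeasure w)) ^ q.toReal) ^ (1/q.toReal) :=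
          ENNReal.rpow_le_rpow hfinal (by positivity)
      _ = eLpNorm f p (wMeasure w) := by
          rw [← ENNReal.rpow_mul, mul_one_div_cancel hqR.ne', ENNReal.rpow_one]
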